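/- Let G(V) be the non-zero component graph of an n-dimensional vector space V (n ≥ 3) over F_2. Then fxd(G(V)) = 2^{n−1}, i.e., every subset of vertices of size 2^{n−1} is a fixing set, and there is a non-fixing subset of size 2^{n−1} − 1 (namely A = {x : both b_l, b_m ∈ S_x or both b_l, b_m ∉ S_x} for any two distinct basis vectors b_l, b_m). -/

import Mathlib

open Finset

/-- Vertices of the non-zero component graph: nonzero vectors of `V = (Fin n → ZMod 2)`. -/
abbrev Vtx (n : ℕ) := {v : Fin n → ZMod 2 // v ≠ 0}

/-- The support (skeleton) of a vector: basis vectors with nonzero coefficient. -/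
def supp {n : ℕ} (v : Fin n → ZMod 2) : Finset (Fin n) :=
  Finset.univ.filter (fun i => v i ≠ 0)

/-- The non-zero component graph of an `n`-dimensional vector space over `F_2`:
two distinct nonzero vectors are adjacent iff their supports intersect. -/
def NZC (n : ℕ) : SimpleGraph (Vtx n) where
  Adj u v := u ≠ v ∧ ∃ i, u.1 i ≠ 0 ∧ v.1 i ≠ 0
  symm := by
    constructor
    rintro u v ⟨h1, i, h2, h3⟩
    exact ⟨h1.symm, i, h3, h2⟩
  loopless := by
    constructor
    rintro u ⟨h, -⟩
    exact h rfl

/-- `D` is a fixing set of `G` if the only automorphism of `G` fixing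
every vertex of `D` is the identity. -/
def IsFixingSet {V : Type*} (G : SimpleGraph V) (D : Set V) : Prop :=
  ∀ g : G ≃g G, (∀ v ∈ D, g v = v) → ∀ v, g v = v

/-- The fixing number: minimum cardinality of a fixing set. -/
noncomputable def fixingNumber {V : Type*} [Fintype V] (G : SimpleGraph V) : ℕ :=
  sInf {k | ∃ D : Finset V, D.card = k ∧ IsFixingSet G ↑D}

/-- The fixed number: minimum `k` such that every `k`-subset of vertices is a fixing set. -/
noncomputable def fixedNumber {V : Type*} [Fintype V] (G : SimpleGraph V) : ℕ :=
  sInf {k | ∀ D : Finset V, D.card = k → IsFixingSet G ↑D}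

namespace NZCaux

variable {n : ℕ}

lemma zmod2_eq : ∀ a b : ZMod 2, ((a ≠ 0) ↔ (b ≠ 0)) → a = b := by decide

lemma zmod2_iff : ∀ a b : ZMod 2, (((a ≠ 0) ↔ (b ≠ 0)) ↔ a = b) := by decide

lemma mem_supp {v : Fin n → ZMod 2} {i : Fin n} : i ∈ supp v ↔ v i ≠ 0 := by
  simp [supp]

lemma supp_inj {u v : Fin n → ZMod 2} (h : supp u = supp v) : u = v := by
  funext j
  exact zmod2_eq _ _ (by simpa [mem_supp] using Finset.ext_iff.mp h j)

def eVec (i : Fin n) : Fin n → ZMod 2 := fun j => if j = i then 1 else 0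

lemma eVec_ne_zero (i : Fin n) : eVec i ≠ 0 := by
  intro h
  have := congrFun h i
  simp [eVec] at this

def eVtx (i : Fin n) : Vtx n := ⟨eVec i, eVec_ne_zero i⟩

lemma supp_eVec (i : Fin n) : supp (eVec i) = {i} := by
  ext j
  simp only [mem_supp, mem_singleton, eVec]
  constructor
  · intro h; by_contra hj; simp [hj] at h
  · rintro rfl; simp

lemma adj_eVtx {u : Vtx n} {i : Fin n} :
    (NZC n).Adj u (eVtx i) ↔ u ≠ eVtx i ∧ u.1 i ≠ 0 := by
  constructor
  · rintro ⟨h1, j, h2, h3⟩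
    refine ⟨h1, ?_⟩
    have hj : j = i := by by_contra hj; simp [eVtx, eVec, hj] at h3
    rwa [hj] at h2
  · rintro ⟨h1, h2⟩
    exact ⟨h1, i, h2, by simp [eVtx, eVec]⟩

def Sing (u : Vtx n) : Prop := ∃ i, supp u.1 = {i}

def SingG {V : Type*} (G : SimpleGraph V) (u : V) : Prop :=
  ∃ v, u ≠ v ∧ ¬ G.Adj u v ∧ ∀ w, G.Adj u w → w = v ∨ G.Adj v w

lemma singG_map {V : Type*} {G : SimpleGraph V} (g : G ≃g G) {u : V}
    (h : SingG G u) : SingG G (g u) := by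
  obtain ⟨v, h1, h2, h3⟩ := h
  refine ⟨g v, fun hh => h1 (g.injective hh), fun hh => h2 (g.map_rel_iff.mp hh), ?_⟩
  intro w hw
  obtain ⟨w', rfl⟩ := g.surjective w
  rcases h3 w' (g.map_rel_iff.mp hw) with h | h
  · left; rw [h]
  · right; exact g.map_rel_iff.mpr h

lemma eq_eVtx_of_supp {u : Vtx n} {i : Fin n} (h : supp u.1 = {i}) : u = eVtx i :=
  Subtype.ext (supp_inj (h.trans (supp_eVec i).symm))

lemma sing_iff (hn : 2 ≤ n) (u : Vtx n) : Sing u ↔ SingG (NZC n) u := by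
  constructor
  · rintro ⟨i, hi⟩
    obtain rfl := eq_eVtx_of_supp hi
    have : Nontrivial (Fin n) := Fin.nontrivial_iff_two_le.mpr hn
    obtain ⟨i', hi'⟩ := exists_ne i
    set c : Fin n → ZMod 2 := fun j => if j = i then 0 else 1 with hc
    have hcne : c ≠ 0 := by
      intro h
      have := congrFun h i'
      simp [hc, hi'] at this
    refine ⟨⟨c, hcne⟩, ?_, ?_, ?_⟩
    · intro h
      have := congrArg (fun x : Vtx n => x.1 i) h
      simp [eVtx, eVec, hc] at this
    · rintro ⟨-, j, h1, h2⟩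
      have hj : j = i := by by_contra hj; simp [eVtx, eVec, hj] at h1
      subst hj
      simp [hc] at h2
    · rintro w ⟨hw1, j, h1, h2⟩
      have hj : j = i := by by_contra hj; simp [eVtx, eVec, hj] at h1
      have h2' : w.1 i ≠ 0 := by rwa [hj] at h2
      by_cases hwv : w = ⟨c, hcne⟩
      · exact Or.inl hwv
      · right
        refine ⟨Ne.symm hwv, ?_⟩
        -- w has a support element ≠ i
        have hex : ∃ k, k ≠ i ∧ w.1 k ≠ 0 := by
          by_contra h
          push_neg at h
          apply hw1
          apply Eq.symm
          apply eq_eVtx_of_supp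
          ext k
          simp only [mem_supp, mem_singleton]
          constructor
          · intro hk; by_contra hki; exact hk (h k hki)
          · rintro rfl; exact h2'
        obtain ⟨k, hk1, hk2⟩ := hex
        exact ⟨k, by simp [hc, hk1], hk2⟩
  · rintro ⟨v, hne, hnadj, hall⟩
    have hdisj : ∀ j, u.1 j ≠ 0 → v.1 j = 0 := by
      intro j hj
      by_contra hv
      exact hnadj ⟨hne, j, hj, hv⟩
    have hex : ∃ i, u.1 i ≠ 0 := by
      by_contra h
      push_neg at h
      exact u.2 (funext fun j => h j)
    obtain ⟨i, hi⟩ := hex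
    refine ⟨i, ?_⟩
    ext j
    simp only [mem_supp, mem_singleton]
    constructor
    · intro hj
      by_contra hji
      have huev : u ≠ eVtx j := by
        intro h
        rw [h] at hi
        simp [eVtx, eVec] at hi
        exact hji hi.symm
      have hadj : (NZC n).Adj u (eVtx j) := ⟨huev, j, hj, by simp [eVtx, eVec]⟩
      rcases hall _ hadj with h | h
      · have : v.1 j = 0 := hdisj j hj
        rw [← h] at this
        simp [eVtx, eVec] at this
      · obtain ⟨-, k, hk1, hk2⟩ := h
        have hkj : k = j := by by_contra hkj; simp [eVtx, eVec, hkj] at hk2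
        subst hkj
        exact hk1 (hdisj k hj)
    · rintro rfl; exact hi

lemma sing_map (hn : 2 ≤ n) (g : NZC n ≃g NZC n) {u : Vtx n} (h : Sing u) :
    Sing (g u) :=
  (sing_iff hn _).mpr (singG_map g ((sing_iff hn u).mp h))

lemma eVtx_inj {i j : Fin n} (h : eVtx i = eVtx j) : i = j := by
  have := congrArg (fun x : Vtx n => supp x.1) h
  simp only [eVtx, supp_eVec] at this
  exact Finset.singleton_injective this

lemma exists_perm (hn : 2 ≤ n) (g : NZC n ≃g NZC n) :
    ∃ σ : Fin n → Fin n, Function.Bijective σ ∧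
      ∀ (u : Vtx n) (i : Fin n), (i ∈ supp u.1 ↔ σ i ∈ supp (g u).1) := by
  have hsing : ∀ i : Fin n, Sing (g (eVtx i)) :=
    fun i => sing_map hn g ⟨i, supp_eVec i⟩
  choose σ hσ using hsing
  have hgev : ∀ i, g (eVtx i) = eVtx (σ i) := fun i => eq_eVtx_of_supp (hσ i)
  have hinj : Function.Injective σ := by
    intro i j h
    have hg : g (eVtx i) = g (eVtx j) := by rw [hgev i, hgev j, h]
    exact eVtx_inj (g.injective hg)
  refine ⟨σ, Finite.injective_iff_bijective.mp hinj, ?_⟩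
  intro u i
  by_cases hu : Sing u
  · obtain ⟨i₀, hi₀⟩ := hu
    obtain rfl := eq_eVtx_of_supp hi₀
    rw [hgev i₀]
    simp only [eVtx, supp_eVec, mem_singleton]
    exact ⟨fun h => by rw [h], fun h => hinj h⟩
  · have hgu : ¬ Sing (g u) := by
      intro h
      have := sing_map hn g.symm h
      rw [g.symm_apply_apply] at this
      exact hu this
    have h1 : i ∈ supp u.1 ↔ (NZC n).Adj u (eVtx i) := by
      rw [adj_eVtx, mem_supp]
      constructor
      · intro h
        exact ⟨fun hh => hu ⟨i, by rw [hh]; exact supp_eVec i⟩, h⟩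
      · exact fun h => h.2
    have h2 : σ i ∈ supp (g u).1 ↔ (NZC n).Adj (g u) (eVtx (σ i)) := by
      rw [adj_eVtx, mem_supp]
      constructor
      · intro h
        exact ⟨fun hh => hgu ⟨σ i, by rw [hh]; exact supp_eVec (σ i)⟩, h⟩
      · exact fun h => h.2
    rw [h1, h2, ← hgev i]
    exact g.map_rel_iff.symm

lemma fix_subset (hn : 2 ≤ n) (g : NZC n ≃g NZC n) (hg : ∃ v, g v ≠ v) :
    ∃ l m : Fin n, l ≠ m ∧ ∀ v : Vtx n, g v = v →
      (l ∈ supp v.1 ↔ m ∈ supp v.1) := by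
  obtain ⟨σ, hbij, hmem⟩ := exists_perm hn g
  by_cases hσ : ∀ i, σ i = i
  · exfalso
    obtain ⟨v, hv⟩ := hg
    apply hv
    apply Subtype.ext (supp_inj ?_)
    ext j
    have h := hmem v j
    rw [hσ j] at h
    exact h.symm
  · push_neg at hσ
    obtain ⟨l, hl⟩ := hσ
    refine ⟨l, σ l, Ne.symm hl, fun v hv => ?_⟩
    have := hmem v l
    rwa [hv] at this


lemma card_S {l m : Fin n} (hlm : l ≠ m) (hn : 1 ≤ n) :
    (univ.filter (fun v : Fin n → ZMod 2 => v l = v m)).card = 2 ^ (n - 1) := by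
  classical
  set f : (Fin n → ZMod 2) → (Fin n → ZMod 2) :=
    fun v => Function.update v m (v m + 1) with hf
  have hfl : ∀ v, f v l = v l := fun v => Function.update_of_ne hlm _ v
  have hfm : ∀ v, f v m = v m + 1 := fun v => Function.update_self _ _ _
  have haddne : ∀ a : ZMod 2, a + 1 ≠ a := by decide
  have haddadd : ∀ a : ZMod 2, a + 1 + 1 = a := by decide
  have hff : ∀ v, f (f v) = v := by
    intro v
    funext j
    by_cases hj : j = m
    · subst hj
      rw [hfm, hfm, haddadd]
    · simp [hf, Function.update_of_ne hj]
  have hcard : (univ.filter (fun v : Fin n → ZMod 2 => v l = v m)).card =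
      (univ.filter (fun v : Fin n → ZMod 2 => ¬ v l = v m)).card := by
    refine Finset.card_bij' (fun v _ => f v) (fun v _ => f v) ?_ ?_
        (fun v _ => hff v) (fun v _ => hff v)
    · intro v hv
      simp only [mem_filter, mem_univ, true_and] at hv ⊢
      rw [hfl, hfm, hv]
      exact fun h => haddne _ h.symm
    · intro v hv
      simp only [mem_filter, mem_univ, true_and] at hv ⊢
      rw [hfl, hfm]
      have hne : ∀ a b : ZMod 2, ¬ a = b → a = b + 1 := by decide
      exact hne _ _ hv
  have htot : (univ.filter (fun v : Fin n → ZMod 2 => v l = v m)).card +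
      (univ.filter (fun v : Fin n → ZMod 2 => ¬ v l = v m)).card = 2 ^ n := by
    rw [Finset.card_filter_add_card_filter_not, Finset.card_univ]
    simp [Fintype.card_fun, ZMod.card]
  rw [← hcard, ← two_mul] at htot
  have h2 : 2 ^ n = 2 * 2 ^ (n - 1) := by
    rw [← pow_succ']
    congr 1
    exact (Nat.succ_pred_eq_of_pos hn).symm
  rw [h2] at htot
  exact Nat.eq_of_mul_eq_mul_left (by norm_num) htot

lemma card_A {l m : Fin n} (hlm : l ≠ m) (hn : 1 ≤ n) :
    (univ.filter (fun x : Vtx n => (l ∈ supp x.1 ↔ m ∈ supp x.1))).card =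
      2 ^ (n - 1) - 1 := by
  classical
  set S := univ.filter (fun v : Fin n → ZMod 2 => v l = v m) with hS
  have h0 : (0 : Fin n → ZMod 2) ∈ S := by simp [hS]
  have hbij : (univ.filter (fun x : Vtx n => (l ∈ supp x.1 ↔ m ∈ supp x.1))).card =
      (S.erase 0).card := by
    apply Finset.card_bij (fun x _ => x.1)
    · intro x hx
      simp only [mem_filter, mem_univ, true_and] at hx
      rw [Finset.mem_erase]
      refine ⟨x.2, ?_⟩
      simp only [hS, mem_filter, mem_univ, true_and]
      rw [← zmod2_iff]
      simpa [mem_supp] using hx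
    · intro x _ y _ h
      exact Subtype.ext h
    · intro v hv
      rw [Finset.mem_erase] at hv
      obtain ⟨hv0, hvS⟩ := hv
      refine ⟨⟨v, hv0⟩, ?_, rfl⟩
      simp only [mem_filter, mem_univ, true_and]
      simp only [hS, mem_filter, mem_univ, true_and] at hvS
      simp only [mem_supp]
      exact (zmod2_iff _ _).mpr hvS
  rw [hbij, Finset.card_erase_of_mem h0, card_S hlm hn]

def permEquiv (σ : Equiv.Perm (Fin n)) : Vtx n ≃ Vtx n where
  toFun v := ⟨fun j => v.1 (σ.symm j), by
    intro h
    apply v.2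
    funext j
    have := congrFun h (σ j)
    simpa using this⟩
  invFun v := ⟨fun j => v.1 (σ j), by
    intro h
    apply v.2
    funext j
    have := congrFun h (σ.symm j)
    simpa using this⟩
  left_inv v := Subtype.ext (funext fun j => by simp)
  right_inv v := Subtype.ext (funext fun j => by simp)

def permIso (σ : Equiv.Perm (Fin n)) : NZC n ≃g NZC n where
  toEquiv := permEquiv σ
  map_rel_iff' := by
    intro u v
    constructor
    · rintro ⟨hne, i, h1, h2⟩
      exact ⟨fun h => hne (by rw [h]), σ.symm i, h1, h2⟩
    · rintro ⟨hne, j, h1, h2⟩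
      refine ⟨fun h => hne ((permEquiv σ).injective h), σ j, ?_, ?_⟩
      · show u.1 (σ.symm (σ j)) ≠ 0
        simpa using h1
      · show v.1 (σ.symm (σ j)) ≠ 0
        simpa using h2

lemma permIso_fix {l m : Fin n} (x : Vtx n) (hx : x.1 l = x.1 m) :
    permIso (Equiv.swap l m) x = x := by
  apply Subtype.ext
  funext j
  show x.1 ((Equiv.swap l m).symm j) = x.1 j
  rw [Equiv.symm_swap]
  rcases eq_or_ne j l with rfl | hjl
  · rw [Equiv.swap_apply_left, hx]
  rcases eq_or_ne j m with rfl | hjm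
  · rw [Equiv.swap_apply_right, hx]
  · rw [Equiv.swap_apply_of_ne_of_ne hjl hjm]

lemma permIso_swap_ne {l m : Fin n} (hlm : l ≠ m) :
    permIso (Equiv.swap l m) (eVtx l) ≠ eVtx l := by
  intro h
  have := congrFun (congrArg Subtype.val h) m
  simp only [eVtx] at this
  have h2 : eVec l ((Equiv.swap l m).symm m) = eVec l m := this
  rw [Equiv.symm_swap, Equiv.swap_apply_right] at h2
  simp [eVec, hlm, Ne.symm hlm] at h2

end NZCaux


open NZCaux in
/-- `fxd(G(V)) = 2^(n-1)`: every subset of `2^(n-1)` vertices is a fixing set, and for any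
two distinct basis vectors `b_l, b_m` the set `A` of vertices containing both or neither
of `b_l, b_m` in their support is a non-fixing set of cardinality `2^(n-1) - 1`. -/
theorem fxd_NZC (n : ℕ) (hn : 3 ≤ n) :
    (∀ D : Finset (Vtx n), D.card = 2 ^ (n - 1) → IsFixingSet (NZC n) ↑D) ∧
    fixedNumber (NZC n) = 2 ^ (n - 1) ∧
    ∀ l m : Fin n, l ≠ m →
      ¬ IsFixingSet (NZC n) {x : Vtx n | l ∈ supp x.1 ↔ m ∈ supp x.1} ∧
      Set.ncard {x : Vtx n | l ∈ supp x.1 ↔ m ∈ supp x.1} = 2 ^ (n - 1) - 1 := by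
  classical
  have hn2 : 2 ≤ n := by omega
  have hn1 : 1 ≤ n := by omega
  have hpos : (0:ℕ) < 2 ^ (n - 1) := pow_pos (by norm_num) _
  have part1 : ∀ D : Finset (Vtx n), D.card = 2 ^ (n - 1) → IsFixingSet (NZC n) ↑D := by
    intro D hD g hfix
    by_contra h
    push_neg at h
    obtain ⟨l, m, hlm, hsub⟩ := fix_subset hn2 g h
    have hDsub : D ⊆ univ.filter (fun x : Vtx n => (l ∈ supp x.1 ↔ m ∈ supp x.1)) := by
      intro x hx
      simp only [mem_filter, mem_univ, true_and]
      exact hsub x (hfix x (Finset.mem_coe.mpr hx))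
    have hle := Finset.card_le_card hDsub
    rw [hD, card_A hlm hn1] at hle
    omega
  have hfixA : ∀ (l m : Fin n), l ≠ m → ∀ x : Vtx n,
      (l ∈ supp x.1 ↔ m ∈ supp x.1) → permIso (Equiv.swap l m) x = x := by
    intro l m _ x hx
    apply permIso_fix
    rw [← zmod2_iff]
    simpa [mem_supp] using hx
  have part3 : ∀ l m : Fin n, l ≠ m →
      ¬ IsFixingSet (NZC n) {x : Vtx n | l ∈ supp x.1 ↔ m ∈ supp x.1} ∧
      Set.ncard {x : Vtx n | l ∈ supp x.1 ↔ m ∈ supp x.1} = 2 ^ (n - 1) - 1 := by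
    intro l m hlm
    constructor
    · intro hfix
      exact permIso_swap_ne hlm (hfix (permIso (Equiv.swap l m))
        (fun x hx => hfixA l m hlm x hx) (eVtx l))
    · have hset : {x : Vtx n | l ∈ supp x.1 ↔ m ∈ supp x.1} =
          ↑(univ.filter (fun x : Vtx n => (l ∈ supp x.1 ↔ m ∈ supp x.1))) := by
        ext x
        simp
      rw [hset, Set.ncard_coe_finset, card_A hlm hn1]
  refine ⟨part1, ?_, part3⟩
  have hmemS : 2 ^ (n - 1) ∈
      {k | ∀ D : Finset (Vtx n), D.card = k → IsFixingSet (NZC n) ↑D} := part1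
  apply le_antisymm
  · exact Nat.sInf_le hmemS
  · apply le_csInf ⟨2 ^ (n - 1), hmemS⟩
    intro k hk
    by_contra hlt
    push_neg at hlt
    have hl0 : (0:ℕ) < n := by omega
    have hl1 : (1:ℕ) < n := by omega
    have hlm : (⟨0, hl0⟩ : Fin n) ≠ ⟨1, hl1⟩ := by
      intro h
      have := congrArg Fin.val h
      simp at this
    set l : Fin n := ⟨0, hl0⟩
    set m : Fin n := ⟨1, hl1⟩
    have hAF : (univ.filter (fun x : Vtx n =>
        (l ∈ supp x.1 ↔ m ∈ supp x.1))).card = 2 ^ (n - 1) - 1 := card_A hlm hn1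
    have hk' : k ≤ (univ.filter (fun x : Vtx n =>
        (l ∈ supp x.1 ↔ m ∈ supp x.1))).card := by
      rw [hAF]
      omega
    obtain ⟨D, hDsub, hDcard⟩ := Finset.exists_subset_card_eq hk'
    have hDfix := hk D hDcard
    apply permIso_swap_ne hlm
    apply hDfix (permIso (Equiv.swap l m))
    · intro x hx
      apply hfixA l m hlm x
      have hxA := hDsub (Finset.mem_coe.mp hx)
      simpa using hxA
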